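/- arXiv:math/0410344 — 2 statements merged into one kernel-verified Lean document; each statement's English description precedes it below -/
import Mathlib

section
/- For any bounded open set A ⊂ ℝ^N, letting B be the open ball centered at the origin with the same Lebesgue measure as A, one has ∫_B |x|^N dx ≤ ∫_A |x|^N dx, with equality if and only if A and B agree up to a null set. -/
open MeasureTheory Metric

section Aux

variable {N : ℕ}

/-- Every set in a subsingleton type is empty or univ. -/
lemma aux_empty_or_univ {α : Type*} [Subsingleton α] (s : Set α) :
    s = ∅ ∨ s = Set.univ := by
  rcases s.eq_empty_or_nonempty with h | ⟨x, hx⟩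
  · exact Or.inl h
  · right
    ext y
    simp only [Set.mem_univ, iff_true]
    rwa [Subsingleton.elim y x]

/-- Key measure comparison: the ball with the same volume as `A` has at most as much
mass outside any closed ball centered at the origin as `A` does. -/
lemma aux_key_meas (A : Set (EuclideanSpace ℝ (Fin N)))
    (hAfin : volume A ≠ ⊤) (R : ℝ)
    (hvol : volume (ball (0 : EuclideanSpace ℝ (Fin N)) R) = volume A) (r : ℝ) :
    volume (ball (0 : EuclideanSpace ℝ (Fin N)) R \ closedBall 0 r)
      ≤ volume (A \ closedBall 0 r) := by
  set B := ball (0 : EuclideanSpace ℝ (Fin N)) R with hB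
  have hC : MeasurableSet (closedBall (0 : EuclideanSpace ℝ (Fin N)) r) :=
    measurableSet_closedBall
  have h1 : volume (A ∩ closedBall (0 : EuclideanSpace ℝ (Fin N)) r)
      ≤ volume (B ∩ closedBall 0 r) := by
    rcases le_or_gt R r with h | h
    · have hsub : B ⊆ closedBall (0 : EuclideanSpace ℝ (Fin N)) r :=
        ball_subset_closedBall.trans (closedBall_subset_closedBall h)
      rw [Set.inter_eq_left.mpr hsub, hvol]
      exact measure_mono Set.inter_subset_left
    · have hsub : closedBall (0 : EuclideanSpace ℝ (Fin N)) r ⊆ B :=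
        closedBall_subset_ball h
      rw [Set.inter_eq_right.mpr hsub]
      exact measure_mono Set.inter_subset_right
  have e1 := measure_inter_add_diff (μ := volume) A hC
  have e2 := measure_inter_add_diff (μ := volume) B hC
  have hBfin : volume B ≠ ⊤ := by rw [hvol]; exact hAfin
  have hBCfin : volume (B ∩ closedBall (0 : EuclideanSpace ℝ (Fin N)) r) ≠ ⊤ :=
    fun h => hBfin (top_le_iff.mp (h ▸ measure_mono Set.inter_subset_left))
  have : volume (B ∩ closedBall (0 : EuclideanSpace ℝ (Fin N)) r) + volume (B \ closedBall 0 r)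
      ≤ volume (B ∩ closedBall 0 r) + volume (A \ closedBall 0 r) := by
    calc volume (B ∩ closedBall (0 : EuclideanSpace ℝ (Fin N)) r) + volume (B \ closedBall 0 r)
        = volume B := e2
      _ = volume A := hvol
      _ = volume (A ∩ closedBall (0 : EuclideanSpace ℝ (Fin N)) r)
            + volume (A \ closedBall 0 r) := e1.symm
      _ ≤ volume (B ∩ closedBall 0 r) + volume (A \ closedBall 0 r) :=
          add_le_add_left h1 _
  exact (ENNReal.add_le_add_iff_left hBCfin).mp this

end Aux

theorem ball_minimizes_Nth_moment {N : ℕ}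
    (A : Set (EuclideanSpace ℝ (Fin N))) (hA : IsOpen A) (hAbdd : Bornology.IsBounded A)
    (R : ℝ) (hR : 0 ≤ R)
    (hvol : volume (ball (0 : EuclideanSpace ℝ (Fin N)) R) = volume A) :
    (∫ x in ball (0 : EuclideanSpace ℝ (Fin N)) R, ‖x‖ ^ N)
      ≤ (∫ x in A, ‖x‖ ^ N) ∧
    ((∫ x in ball (0 : EuclideanSpace ℝ (Fin N)) R, ‖x‖ ^ N) = (∫ x in A, ‖x‖ ^ N) ↔
      volume (symmDiff A (ball (0 : EuclideanSpace ℝ (Fin N)) R)) = 0) := by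
  set B := ball (0 : EuclideanSpace ℝ (Fin N)) R with hBdef
  have hAm : MeasurableSet A := hA.measurableSet
  have hBm : MeasurableSet B := measurableSet_ball
  have hAfin : volume A ≠ ⊤ := hAbdd.measure_lt_top.ne
  have hBfin : volume B ≠ ⊤ := by rw [hvol]; exact hAfin
  have f_cont : Continuous fun x : EuclideanSpace ℝ (Fin N) => ‖x‖ ^ N :=
    (continuous_norm.pow N)
  have f_nn : ∀ x : EuclideanSpace ℝ (Fin N), 0 ≤ ‖x‖ ^ N :=
    fun x => pow_nonneg (norm_nonneg x) N
  have hlevm : ∀ t : ℝ, MeasurableSet {a : EuclideanSpace ℝ (Fin N) | t < ‖a‖ ^ N} :=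
    fun t => measurableSet_lt measurable_const f_cont.measurable
  -- layer cake representation
  have layercake : ∀ (S : Set (EuclideanSpace ℝ (Fin N))), MeasurableSet S →
      ∫⁻ x in S, ENNReal.ofReal (‖x‖ ^ N)
        = ∫⁻ t in Set.Ioi 0, volume ({a : EuclideanSpace ℝ (Fin N) | t < ‖a‖ ^ N} ∩ S) := by
    intro S hS
    rw [lintegral_eq_lintegral_meas_lt _ (ae_of_all _ f_nn) f_cont.aemeasurable]
    refine lintegral_congr fun t => ?_
    rw [Measure.restrict_apply (hlevm t)]
  -- pointwise comparison of level-set measures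
  have key : ∀ t : ℝ, 0 < t →
      volume ({a : EuclideanSpace ℝ (Fin N) | t < ‖a‖ ^ N} ∩ B)
        ≤ volume ({a : EuclideanSpace ℝ (Fin N) | t < ‖a‖ ^ N} ∩ A) := by
    intro t ht
    rcases Nat.eq_zero_or_pos N with hN | hN
    · by_cases h1 : t < 1
      · have huniv : {a : EuclideanSpace ℝ (Fin N) | t < ‖a‖ ^ N} = Set.univ := by
          ext x; simp [hN, h1]
        rw [huniv, Set.univ_inter, Set.univ_inter, hvol]
      · have hemp : {a : EuclideanSpace ℝ (Fin N) | t < ‖a‖ ^ N} = ∅ := by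
          ext x; simp [hN, h1]
        simp [hemp]
    · have hset : {a : EuclideanSpace ℝ (Fin N) | t < ‖a‖ ^ N}
          = (closedBall (0 : EuclideanSpace ℝ (Fin N)) (t ^ (N : ℝ)⁻¹))ᶜ := by
        ext x
        simp only [Set.mem_setOf_eq, Set.mem_compl_iff, mem_closedBall, dist_zero_right, not_le]
        rw [← Real.rpow_natCast ‖x‖ N]
        exact (Real.rpow_inv_lt_iff_of_pos ht.le (norm_nonneg x)
          (by exact_mod_cast hN)).symm
      rw [hset, Set.inter_comm _ B, Set.inter_comm _ A, ← Set.diff_eq, ← Set.diff_eq]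
      exact aux_key_meas A hAfin R hvol _
  -- finiteness of the lintegrals
  obtain ⟨M, hM⟩ := hAbdd.subset_closedBall (0 : EuclideanSpace ℝ (Fin N))
  have hLA_fin : ∫⁻ x in A, ENNReal.ofReal (‖x‖ ^ N) ≠ ⊤ := by
    have hb : ∫⁻ x in A, ENNReal.ofReal (‖x‖ ^ N)
        ≤ ∫⁻ _ in A, ENNReal.ofReal (M ^ N) := by
      refine setLIntegral_mono' hAm fun x hx => ?_
      refine ENNReal.ofReal_le_ofReal (pow_le_pow_left₀ (norm_nonneg x) ?_ N)
      simpa [dist_zero_right] using hM hx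
    refine ne_top_of_le_ne_top ?_ hb
    rw [setLIntegral_const]
    exact ENNReal.mul_ne_top ENNReal.ofReal_ne_top hAfin
  have hgBgA : (fun t => volume ({a : EuclideanSpace ℝ (Fin N) | t < ‖a‖ ^ N} ∩ B))
      ≤ᵐ[volume.restrict (Set.Ioi 0)]
        fun t => volume ({a : EuclideanSpace ℝ (Fin N) | t < ‖a‖ ^ N} ∩ A) :=
    (ae_restrict_iff' measurableSet_Ioi).2 (ae_of_all _ fun t ht => key t ht)
  have hLBA : ∫⁻ x in B, ENNReal.ofReal (‖x‖ ^ N) ≤ ∫⁻ x in A, ENNReal.ofReal (‖x‖ ^ N) := by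
    rw [layercake A hAm, layercake B hBm]
    exact lintegral_mono_ae hgBgA
  have hLB_fin : ∫⁻ x in B, ENNReal.ofReal (‖x‖ ^ N) ≠ ⊤ := ne_top_of_le_ne_top hLA_fin hLBA
  have hIB : ∫ x in B, ‖x‖ ^ N = (∫⁻ x in B, ENNReal.ofReal (‖x‖ ^ N)).toReal :=
    integral_eq_lintegral_of_nonneg_ae (ae_of_all _ f_nn) f_cont.aestronglyMeasurable
  have hIA : ∫ x in A, ‖x‖ ^ N = (∫⁻ x in A, ENNReal.ofReal (‖x‖ ^ N)).toReal :=
    integral_eq_lintegral_of_nonneg_ae (ae_of_all _ f_nn) f_cont.aestronglyMeasurable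
  constructor
  · rw [hIB, hIA]
    exact ENNReal.toReal_mono hLA_fin hLBA
  constructor
  · -- equality implies a.e. equal sets
    intro heq
    have hLeq : ∫⁻ x in B, ENNReal.ofReal (‖x‖ ^ N) = ∫⁻ x in A, ENNReal.ofReal (‖x‖ ^ N) := by
      rw [hIB, hIA] at heq
      exact (ENNReal.toReal_eq_toReal_iff' hLB_fin hLA_fin).mp heq
    rcases hR.eq_or_lt with hR0 | hR0
    · -- degenerate case `R = 0`
      have hB0 : B = ∅ := by rw [hBdef, ← hR0, ball_zero]
      have hA0 : volume A = 0 := by rw [← hvol, hB0, measure_empty]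
      rw [hB0, show (∅ : Set (EuclideanSpace ℝ (Fin N))) = ⊥ from rfl, symmDiff_bot]
      exact hA0
    rcases Nat.eq_zero_or_pos N with hN | hN
    · -- dimension `0` : the space is a subsingleton
      have hsub : Subsingleton (EuclideanSpace ℝ (Fin N)) :=
        ⟨fun a b => PiLp.ext fun i => by rw [hN] at i; exact i.elim0⟩
      rcases aux_empty_or_univ A with hA1 | hA1 <;> rcases aux_empty_or_univ B with hB1 | hB1
      · rw [hA1, hB1, show (∅ : Set (EuclideanSpace ℝ (Fin N))) = ⊥ from rfl, symmDiff_bot]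
        exact measure_empty
      · have : volume (Set.univ : Set (EuclideanSpace ℝ (Fin N))) = 0 := by
          rw [← hB1, hvol, hA1, measure_empty]
        exact measure_mono_null (Set.subset_univ _) this
      · have : volume (Set.univ : Set (EuclideanSpace ℝ (Fin N))) = 0 := by
          rw [← hA1, ← hvol, hB1, measure_empty]
        exact measure_mono_null (Set.subset_univ _) this
      · rw [hA1, hB1, symmDiff_self]
        exact measure_empty
    -- main case `N ≥ 1`, `R > 0`
    · have hNR : (0 : ℝ) < N := by exact_mod_cast hN
      have hset : ∀ t : ℝ, 0 < t → {a : EuclideanSpace ℝ (Fin N) | t < ‖a‖ ^ N}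
          = (closedBall (0 : EuclideanSpace ℝ (Fin N)) (t ^ (N : ℝ)⁻¹))ᶜ := by
        intro t ht
        ext x
        simp only [Set.mem_setOf_eq, Set.mem_compl_iff, mem_closedBall, dist_zero_right, not_le]
        rw [← Real.rpow_natCast ‖x‖ N]
        exact (Real.rpow_inv_lt_iff_of_pos ht.le (norm_nonneg x) hNR).symm
      have hanti : Antitone fun t =>
          volume ({a : EuclideanSpace ℝ (Fin N) | t < ‖a‖ ^ N} ∩ A) := by
        intro s t hst
        exact measure_mono (Set.inter_subset_inter_left _ fun a ha => lt_of_le_of_lt hst ha)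
      have haeq : (fun t => volume ({a : EuclideanSpace ℝ (Fin N) | t < ‖a‖ ^ N} ∩ B))
          =ᵐ[volume.restrict (Set.Ioi 0)]
            fun t => volume ({a : EuclideanSpace ℝ (Fin N) | t < ‖a‖ ^ N} ∩ A) := by
        refine ae_eq_of_ae_le_of_lintegral_le hgBgA ?_ hanti.measurable.aemeasurable ?_
        · rw [← layercake B hBm]; exact hLB_fin
        · rw [← layercake A hAm, ← layercake B hBm, hLeq]
      -- for every `r ∈ [0, R)` find `ρ ∈ (r, R)` with `closedBall ρ \ A` null
      have hgood : ∀ r, 0 ≤ r → r < R → ∃ ρ, r < ρ ∧ ρ < R ∧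
          volume (closedBall (0 : EuclideanSpace ℝ (Fin N)) ρ \ A) = 0 := by
        intro r hr0 hrR
        have hpos : 0 < volume (Set.Ioo (r ^ N) (R ^ N)) := by
          rw [Real.volume_Ioo]
          exact ENNReal.ofReal_pos.mpr (sub_pos.mpr (pow_lt_pow_left₀ hrR hr0 hN.ne'))
        have hIoosub : Set.Ioo (r ^ N) (R ^ N) ⊆ Set.Ioi 0 :=
          fun t ht => lt_of_le_of_lt (pow_nonneg hr0 N) ht.1
        have hbad : volume ({t : ℝ | ¬ volume ({a : EuclideanSpace ℝ (Fin N) | t < ‖a‖ ^ N} ∩ B)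
            = volume ({a : EuclideanSpace ℝ (Fin N) | t < ‖a‖ ^ N} ∩ A)} ∩ Set.Ioi 0) = 0 := by
          have := ae_iff.mp haeq
          rwa [Measure.restrict_apply' measurableSet_Ioi] at this
        have hex : ∃ t ∈ Set.Ioo (r ^ N) (R ^ N),
            volume ({a : EuclideanSpace ℝ (Fin N) | t < ‖a‖ ^ N} ∩ B)
              = volume ({a : EuclideanSpace ℝ (Fin N) | t < ‖a‖ ^ N} ∩ A) := by
          by_contra hcon
          push_neg at hcon
          exact hpos.ne'
            (measure_mono_null (fun t ht => Set.mem_inter (hcon t ht) (hIoosub ht)) hbad)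
        obtain ⟨t, ⟨ht1, ht2⟩, hteq⟩ := hex
        have ht0 : 0 < t := lt_of_le_of_lt (pow_nonneg hr0 N) ht1
        refine ⟨t ^ (N : ℝ)⁻¹, ?_, ?_, ?_⟩
        · rw [Real.lt_rpow_inv_iff_of_pos hr0 ht0.le hNR, Real.rpow_natCast]
          exact ht1
        · rw [Real.rpow_inv_lt_iff_of_pos ht0.le hR hNR, Real.rpow_natCast]
          exact ht2
        · -- equality of level-set measures gives nullity
          set C := closedBall (0 : EuclideanSpace ℝ (Fin N)) (t ^ (N : ℝ)⁻¹) with hCdef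
          have hCm : MeasurableSet C := measurableSet_closedBall
          have hCB : C ⊆ B := by
            rw [hCdef, hBdef]
            refine closedBall_subset_ball ?_
            rw [Real.rpow_inv_lt_iff_of_pos ht0.le hR hNR, Real.rpow_natCast]
            exact ht2
          have hCfin : volume C ≠ ⊤ :=
            fun h => hBfin (top_le_iff.mp (h ▸ measure_mono hCB))
          have hdiffeq : volume (B \ C) = volume (A \ C) := by
            have := hteq
            rw [hset t ht0, Set.inter_comm _ B, Set.inter_comm _ A,
              ← Set.diff_eq, ← Set.diff_eq] at this
            exact this
          have e1 := measure_inter_add_diff (μ := volume) B hCm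
          have e2 := measure_inter_add_diff (μ := volume) A hCm
          rw [Set.inter_eq_right.mpr hCB] at e1
          -- volume (A ∩ C) = volume C
          have hACfin : volume (A \ C) ≠ ⊤ :=
            fun h => hAfin (top_le_iff.mp (h ▸ measure_mono Set.diff_subset))
          have hAC : volume (A ∩ C) = volume C := by
            have hkey : volume (A ∩ C) + volume (A \ C) = volume C + volume (A \ C) := by
              rw [e2, ← hvol, ← e1, hdiffeq]
            exact (ENNReal.add_left_inj hACfin).mp hkey
          have e3 := measure_inter_add_diff (μ := volume) C hAm
          have hCA : volume (C ∩ A) = volume C := by rw [Set.inter_comm, hAC]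
          have hkey2 : volume (C ∩ A) + volume (C \ A) = volume (C ∩ A) + 0 := by
            rw [e3, ← hCA, add_zero]
          have hCAfin : volume (C ∩ A) ≠ ⊤ :=
            fun h => hCfin (top_le_iff.mp (h ▸ measure_mono Set.inter_subset_left))
          exact (ENNReal.add_right_inj hCAfin).mp hkey2
      -- cover the open ball by an increasing sequence of good closed balls
      have hchoice : ∀ n : ℕ, ∃ ρ, max 0 (R - ((n : ℝ) + 1)⁻¹) < ρ ∧ ρ < R ∧
          volume (closedBall (0 : EuclideanSpace ℝ (Fin N)) ρ \ A) = 0 := by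
        intro n
        refine hgood _ (le_max_left _ _) (max_lt hR0 ?_)
        have : (0 : ℝ) < ((n : ℝ) + 1)⁻¹ := by positivity
        linarith
      choose ρseq hρ1 hρ2 hρ3 using hchoice
      have hBAnull : volume (B \ A) = 0 := by
        refine measure_mono_null (t := ⋃ n : ℕ,
          (closedBall (0 : EuclideanSpace ℝ (Fin N)) (ρseq n) \ A)) ?_
          (measure_iUnion_null fun n => hρ3 n)
        rintro x ⟨hxB, hxA⟩
        have hx : ‖x‖ < R := by rwa [hBdef, mem_ball, dist_zero_right] at hxB
        obtain ⟨n, hn⟩ := exists_nat_one_div_lt (sub_pos.mpr hx)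
        have hxn : ‖x‖ < ρseq n := by
          have h1 : R - ((n : ℝ) + 1)⁻¹ > ‖x‖ := by
            rw [one_div] at hn
            linarith
          exact lt_of_lt_of_le h1 ((le_max_right _ _).trans (hρ1 n).le)
        exact Set.mem_iUnion.mpr ⟨n, ⟨by rw [mem_closedBall, dist_zero_right]; exact hxn.le, hxA⟩⟩
      have e1 := measure_inter_add_diff (μ := volume) B hAm
      have e2 := measure_inter_add_diff (μ := volume) A hBm
      have hBA : volume (B ∩ A) = volume A := by
        rw [← hvol, ← e1, hBAnull, add_zero]
      have hAB : volume (A ∩ B) = volume A := by rw [Set.inter_comm, hBA]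
      have hABfin : volume (A ∩ B) ≠ ⊤ :=
        fun h => hAfin (top_le_iff.mp (h ▸ measure_mono Set.inter_subset_left))
      have hABnull : volume (A \ B) = 0 := by
        have hkey2 : volume (A ∩ B) + volume (A \ B) = volume (A ∩ B) + 0 := by
          rw [e2, ← hAB, add_zero]
        exact (ENNReal.add_right_inj hABfin).mp hkey2
      rw [Set.symmDiff_def]
      exact measure_union_null hABnull hBAnull
  · -- a.e. equal sets implies equality
    intro hsd
    have hae : A =ᵐ[volume] B := measure_symmDiff_eq_zero_iff.mp hsd
    exact (setIntegral_congr_set hae).symm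
end

section
/- Let h : [0,∞) → ℝ be integrable with ∫_0^∞ s|h(s)| ds < ∞, and suppose: (a) ∫_0^r h(s) ds ≥ 0 for all r > 0; (b) ∫_0^∞ h(s) ds = 0; (c) ∫_0^∞ s h(s) ds ≥ 0. Then ∫_0^∞ s h(s) ds = 0 and ∫_0^r h(s) ds = 0 for all r ≥ 0. -/
open MeasureTheory intervalIntegral

theorem key_integral_lemma (h : ℝ → ℝ)
    (hint : IntegrableOn h (Set.Ioi 0))
    (hmom : IntegrableOn (fun s => s * |h s|) (Set.Ioi 0))
    (ha : ∀ r : ℝ, 0 < r → 0 ≤ ∫ s in (0:ℝ)..r, h s)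
    (hb : ∫ s in Set.Ioi (0:ℝ), h s = 0)
    (hc : 0 ≤ ∫ s in Set.Ioi (0:ℝ), s * h s) :
    (∫ s in Set.Ioi (0:ℝ), s * h s = 0) ∧
    (∀ r : ℝ, 0 ≤ r → ∫ s in (0:ℝ)..r, h s = 0) := by
  set g : ℝ → ℝ := (Set.Ioi (0:ℝ)).indicator h with hgdef
  have hg : Integrable g := (integrable_indicator_iff measurableSet_Ioi).mpr hint
  set G : ℝ → ℝ := fun r => ∫ s in (0:ℝ)..r, g s with hGdef
  have hGcont : Continuous G := hg.continuous_primitive 0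
  have hGH : ∀ r : ℝ, 0 ≤ r → G r = ∫ s in (0:ℝ)..r, h s := by
    intro r hr
    simp only [hGdef, intervalIntegral.integral_of_le hr]
    exact setIntegral_congr_fun measurableSet_Ioc fun x hx => Set.indicator_of_mem hx.1 h
  have hGnonneg : ∀ r ∈ Set.Ioi (0:ℝ), 0 ≤ G r := by
    intro r hr
    rw [hGH r (le_of_lt hr)]
    exact ha r hr
  -- tail identity
  have htail : ∀ t : ℝ, 0 < t → ∫ s in Set.Ioi t, h s = - G t := by
    intro t ht
    have hdisj : Disjoint (Set.Ioc 0 t) (Set.Ioi t) := Set.Ioc_disjoint_Ioi le_rfl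
    have hun : Set.Ioc 0 t ∪ Set.Ioi t = Set.Ioi 0 := Set.Ioc_union_Ioi_eq_Ioi ht.le
    have h1 : IntegrableOn h (Set.Ioc 0 t) := hint.mono_set Set.Ioc_subset_Ioi_self
    have h2 : IntegrableOn h (Set.Ioi t) := hint.mono_set (Set.Ioi_subset_Ioi ht.le)
    have hsum := setIntegral_union hdisj measurableSet_Ioi h1 h2
    rw [hun, hb] at hsum
    have hGt : G t = ∫ s in Set.Ioc 0 t, h s := by
      rw [hGH t ht.le, intervalIntegral.integral_of_le ht.le]
    rw [hGt]
    linarith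
  -- the Fubini integrand
  set F : ℝ × ℝ → ℝ := fun p => if 0 < p.1 ∧ p.1 < p.2 then g p.2 else 0 with hFdef
  have hS : MeasurableSet {p : ℝ × ℝ | 0 < p.1 ∧ p.1 < p.2} :=
    (measurableSet_lt measurable_const measurable_fst).inter
      (measurableSet_lt measurable_fst measurable_snd)
  have hFmeas : AEStronglyMeasurable F (volume.prod volume) := by
    have hFind : F = {p : ℝ × ℝ | 0 < p.1 ∧ p.1 < p.2}.indicator (fun p => g p.2) := by
      funext p
      by_cases hp : 0 < p.1 ∧ p.1 < p.2
      · rw [hFdef]; simp only [if_pos hp]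
        exact (Set.indicator_of_mem (show p ∈ {q : ℝ × ℝ | 0 < q.1 ∧ q.1 < q.2} from hp)
          (fun q => g q.2)).symm
      · rw [hFdef]; simp only [if_neg hp]
        exact (Set.indicator_of_notMem (show p ∉ {q : ℝ × ℝ | 0 < q.1 ∧ q.1 < q.2} from hp)
          (fun q => g q.2)).symm
    rw [hFind]
    exact (hg.aestronglyMeasurable.comp_snd).indicator hS
  have hsec : ∀ s : ℝ, (fun t => F (t, s)) = (Set.Ioo 0 s).indicator (fun _ => g s) := by
    intro s; funext t
    by_cases ht : t ∈ Set.Ioo 0 s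
    · rw [Set.indicator_of_mem ht]
      exact if_pos ⟨ht.1, ht.2⟩
    · rw [Set.indicator_of_notMem ht]
      exact if_neg (fun hcon => ht ⟨hcon.1, hcon.2⟩)
  have hnorm : ∀ s : ℝ, (∫ t, ‖F (t, s)‖) = max s 0 * |g s| := by
    intro s
    have h1 : (fun t => ‖F (t, s)‖) = fun t => (Set.Ioo 0 s).indicator (fun _ => ‖g s‖) t := by
      funext t
      rw [show F (t, s) = (Set.Ioo 0 s).indicator (fun _ => g s) t from congrFun (hsec s) t,
        norm_indicator_eq_indicator_norm]
    rw [h1, MeasureTheory.integral_indicator measurableSet_Ioo, setIntegral_const, Real.volume_real_Ioo, sub_zero,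
      smul_eq_mul, Real.norm_eq_abs]
  have hφ : Integrable (fun s => max s 0 * |g s|) := by
    have heq : (fun s => max s 0 * |g s|) = (Set.Ioi (0:ℝ)).indicator (fun s => s * |h s|) := by
      funext s
      by_cases hs : s ∈ Set.Ioi (0:ℝ)
      · rw [Set.indicator_of_mem hs, max_eq_left (Set.mem_Ioi.mp hs).le, hgdef,
          Set.indicator_of_mem hs]
      · rw [Set.indicator_of_notMem hs, hgdef, Set.indicator_of_notMem hs, abs_zero, mul_zero]
    rw [heq]
    exact (integrable_indicator_iff measurableSet_Ioi).mpr hmom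
  have hFint : Integrable F (volume.prod volume) := by
    rw [integrable_prod_iff' hFmeas]
    constructor
    · refine Filter.Eventually.of_forall fun s => ?_
      rw [hsec s]
      exact (integrable_indicator_iff measurableSet_Ioo).mpr
        (integrableOn_const measure_Ioo_lt_top.ne)
    · simpa only [hnorm] using hφ
  -- inner integrals
  have hinner_left : ∀ t : ℝ, (∫ s, F (t, s)) = (Set.Ioi (0:ℝ)).indicator (fun u => - G u) t := by
    intro t
    by_cases ht : t ∈ Set.Ioi (0:ℝ)
    · have ht' : (0:ℝ) < t := ht
      rw [Set.indicator_of_mem ht]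
      have h1 : (fun s => F (t, s)) = (Set.Ioi t).indicator g := by
        funext s
        by_cases hs : s ∈ Set.Ioi t
        · rw [Set.indicator_of_mem hs]
          exact if_pos ⟨ht', hs⟩
        · rw [Set.indicator_of_notMem hs]
          exact if_neg (fun hcon => hs hcon.2)
      rw [h1, MeasureTheory.integral_indicator measurableSet_Ioi]
      have h2 : ∫ s in Set.Ioi t, g s = ∫ s in Set.Ioi t, h s :=
        setIntegral_congr_fun measurableSet_Ioi fun x hx =>
          Set.indicator_of_mem (lt_trans ht' hx) h
      rw [h2, htail t ht']
    · rw [Set.indicator_of_notMem ht]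
      have h1 : (fun s => F (t, s)) = fun _ => (0:ℝ) := by
        funext s
        exact if_neg (fun hcon => ht hcon.1)
      rw [h1, MeasureTheory.integral_zero]
  have hinner_right : ∀ s : ℝ, (∫ t, F (t, s))
      = (Set.Ioi (0:ℝ)).indicator (fun u => u * h u) s := by
    intro s
    rw [hsec s, MeasureTheory.integral_indicator measurableSet_Ioo, setIntegral_const, Real.volume_real_Ioo,
      sub_zero, smul_eq_mul]
    by_cases hs : s ∈ Set.Ioi (0:ℝ)
    · rw [Set.indicator_of_mem hs, max_eq_left (Set.mem_Ioi.mp hs).le, hgdef,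
        Set.indicator_of_mem hs]
    · rw [Set.indicator_of_notMem hs, max_eq_right (not_lt.mp hs), zero_mul]
  -- Fubini
  have hswap : (∫ t, ∫ s, F (t, s)) = ∫ s, ∫ t, F (t, s) :=
    integral_integral_swap hFint
  have hkey : (- ∫ t in Set.Ioi (0:ℝ), G t) = ∫ s in Set.Ioi (0:ℝ), s * h s := by
    have h1 : (∫ t, ∫ s, F (t, s)) = - ∫ t in Set.Ioi (0:ℝ), G t := by
      simp only [hinner_left]
      rw [MeasureTheory.integral_indicator measurableSet_Ioi, MeasureTheory.integral_neg]
    have h2 : (∫ s, ∫ t, F (t, s)) = ∫ s in Set.Ioi (0:ℝ), s * h s := by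
      simp only [hinner_right]
      rw [MeasureTheory.integral_indicator measurableSet_Ioi]
    rw [← h1, ← h2]
    exact hswap
  have hGint : IntegrableOn G (Set.Ioi (0:ℝ)) := by
    have hip := hFint.integral_prod_left
    have heq : (fun t => ∫ s, F (t, s)) = (Set.Ioi (0:ℝ)).indicator (fun u => - G u) :=
      funext hinner_left
    rw [heq, integrable_indicator_iff measurableSet_Ioi] at hip
    exact integrable_neg_iff.mp (by exact hip)
  have hGpos : 0 ≤ ∫ t in Set.Ioi (0:ℝ), G t := setIntegral_nonneg measurableSet_Ioi hGnonneg
  have hGzero : ∫ t in Set.Ioi (0:ℝ), G t = 0 := le_antisymm (by linarith) hGpos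
  have hI : ∫ s in Set.Ioi (0:ℝ), s * h s = 0 := by
    rw [← hkey, hGzero, neg_zero]
  refine ⟨hI, ?_⟩
  have hle : 0 ≤ᵐ[volume.restrict (Set.Ioi (0:ℝ))] G :=
    (ae_restrict_iff' measurableSet_Ioi).mpr (Filter.Eventually.of_forall hGnonneg)
  have hae : G =ᵐ[volume.restrict (Set.Ioi (0:ℝ))] 0 :=
    (setIntegral_eq_zero_iff_of_nonneg_ae hle hGint).mp hGzero
  have heq0 : Set.EqOn G 0 (Set.Ioi (0:ℝ)) :=
    Measure.eqOn_of_ae_eq hae hGcont.continuousOn continuousOn_const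
      (by rw [isOpen_Ioi.interior_eq]; exact subset_closure)
  intro r hr
  rcases eq_or_lt_of_le hr with rfl | hr'
  · simp
  · rw [← hGH r hr]
    exact heq0 hr'
end
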